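/- Let u ∈ C²[0, t_{j+1}], M₂ = max |u''| on [0, t_{j+1}], and let Π_{1,s} u denote the linear interpolant of u on [t_{s-1}, t_s] (uniform grid t_s = sτ). Then |(1/Γ(1-α)) Σ_{s=1}^{j} ∫_{t_{s-1}}^{t_s} (u'(η) - (Π_{1,s}u)'(η)) (t_{j+1/2} - η)^{-α} dη| ≤ (2^α M₂ / (8 Γ(1-α))) τ^{2-α}. -/

import Mathlib

open Real Set Finset

open intervalIntegral

lemma interp_err {u : ℝ → ℝ} (hu : ContDiff ℝ 2 u) {a b M : ℝ} (hab : a < b)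
    (hM : ∀ t ∈ Icc a b, |iteratedDeriv 2 u t| ≤ M) {x : ℝ} (hx : x ∈ Icc a b) :
    |u x - (u a + (u b - u a) / (b - a) * (x - a))| ≤ M * (b - a) ^ 2 / 8 := by
  have hba : b - a ≠ 0 := sub_ne_zero.mpr hab.ne'
  have hM0 : 0 ≤ M := le_trans (abs_nonneg _) (hM a ⟨le_refl a, hab.le⟩)
  have hud : Differentiable ℝ u := hu.differentiable (by norm_num)
  have hd1 : Differentiable ℝ (deriv u) :=
    ((contDiff_succ_iff_deriv.mp (by exact_mod_cast hu : ContDiff ℝ (1+1) u)).2.2).differentiable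
      one_ne_zero
  have hiter : iteratedDeriv 2 u = deriv (deriv u) := by
    rw [show (2:ℕ) = 1+1 from rfl, iteratedDeriv_succ, iteratedDeriv_one]
  set slope := (u b - u a) / (b - a) with hslope
  rcases eq_or_lt_of_le hx.1 with rfl | hax
  · have h0 : u a - (u a + slope * (a - a)) = 0 := by ring
    rw [h0, abs_zero]; positivity
  rcases eq_or_lt_of_le hx.2 with rfl | hxb
  · have h0 : u x - (u a + slope * (x - a)) = 0 := by
      rw [hslope, div_mul_cancel₀ _ hba]; ring
    rw [h0, abs_zero]; positivity
  -- main case a < x < b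
  set K := (u x - (u a + slope * (x - a))) / ((x - a) * (x - b)) with hK
  have hxa : x - a ≠ 0 := sub_ne_zero.mpr hax.ne'
  have hxb' : x - b ≠ 0 := sub_ne_zero.mpr hxb.ne
  have hex : u x - (u a + slope * (x - a)) = K * ((x - a) * (x - b)) := by
    rw [hK]; field_simp
  set B := slope - K * (a + b) with hB
  set A := u a - slope * a + K * (a * b) with hA
  set g : ℝ → ℝ := fun t => u t - (K * t ^ 2 + B * t + A) with hg
  have hg' : ∀ t, HasDerivAt g (deriv u t - (2 * K * t + B)) t := by
    intro t
    have h1 : HasDerivAt (fun t : ℝ => K * t ^ 2 + B * t + A) (2 * K * t + B) t := by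
      have := (((hasDerivAt_pow 2 t).const_mul K).add ((hasDerivAt_id t).const_mul B)).add_const A
      exact this.congr_deriv (by ring)
    exact ((hud t).hasDerivAt).sub h1
  have hgc : Continuous g := hud.continuous.sub (by fun_prop)
  have hga : g a = 0 := by simp only [hg, hB, hA]; ring
  have hgb : g b = 0 := by
    have hs : slope * (b - a) = u b - u a := by rw [hslope]; field_simp
    simp only [hg, hB, hA]; nlinarith [hs]
  have hgx : g x = 0 := by
    simp only [hg, hB, hA]; nlinarith [hex]
  obtain ⟨ξ₁, hξ₁, hdξ₁⟩ := exists_deriv_eq_zero hax hgc.continuousOn (hga.trans hgx.symm)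
  obtain ⟨ξ₂, hξ₂, hdξ₂⟩ := exists_deriv_eq_zero hxb hgc.continuousOn (hgx.trans hgb.symm)
  have hg'ξ₁ : deriv u ξ₁ - (2 * K * ξ₁ + B) = 0 := by rw [← (hg' ξ₁).deriv]; exact hdξ₁
  have hg'ξ₂ : deriv u ξ₂ - (2 * K * ξ₂ + B) = 0 := by rw [← (hg' ξ₂).deriv]; exact hdξ₂
  set G : ℝ → ℝ := fun t => deriv u t - (2 * K * t + B) with hGdef
  have hGc : Continuous G := hd1.continuous.sub (by fun_prop)
  have hG' : ∀ t, HasDerivAt G (iteratedDeriv 2 u t - 2 * K) t := by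
    intro t
    have h1 : HasDerivAt (fun t : ℝ => 2 * K * t + B) (2 * K) t := by
      simpa using ((hasDerivAt_id t).const_mul (2 * K)).add_const B
    have := ((hd1 t).hasDerivAt).sub h1
    rw [hiter]; exact this
  have h12 : ξ₁ < ξ₂ := hξ₁.2.trans hξ₂.1
  obtain ⟨ξ, hξ, hdξ⟩ := exists_deriv_eq_zero h12 hGc.continuousOn (hg'ξ₁.trans hg'ξ₂.symm)
  have hval : iteratedDeriv 2 u ξ - 2 * K = 0 := by rw [← (hG' ξ).deriv]; exact hdξ
  have hξab : ξ ∈ Icc a b :=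
    ⟨(hξ₁.1.trans hξ.1).le, (hξ.2.trans hξ₂.2).le⟩
  have hKb : |2 * K| ≤ M := by
    have := hM ξ hξab
    rwa [show (2:ℝ) * K = iteratedDeriv 2 u ξ by linarith] 
  rw [hex, abs_mul]
  have h1 : |(x - a) * (x - b)| ≤ (b - a) ^ 2 / 4 := by
    rw [abs_mul, abs_of_pos (by linarith : (0:ℝ) < x - a), abs_of_neg (by linarith : x - b < 0)]
    nlinarith [sq_nonneg ((x - a) - (b - x))]
  have hK2 : |K| ≤ M / 2 := by
    rw [abs_mul, abs_of_pos (by norm_num : (0:ℝ) < 2)] at hKb; linarith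
  calc |K| * |(x - a) * (x - b)| ≤ (M / 2) * ((b - a) ^ 2 / 4) := by
        apply mul_le_mul hK2 h1 (abs_nonneg _) (by linarith)
    _ = M * (b - a) ^ 2 / 8 := by ring

lemma interval_bound {u : ℝ → ℝ} (hu : ContDiff ℝ 2 u) {a b c M α : ℝ} (hab : a < b)
    (hbc : b < c) (hM : ∀ t ∈ Icc a b, |iteratedDeriv 2 u t| ≤ M) (hα0 : 0 < α) :
    |∫ η in a..b, (deriv u η - (u b - u a) / (b - a)) * (c - η) ^ (-α)|
      ≤ M * (b - a) ^ 2 / 8 * ((c - b) ^ (-α) - (c - a) ^ (-α)) := by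
  have hba : b - a ≠ 0 := sub_ne_zero.mpr hab.ne'
  have hM0 : 0 ≤ M := le_trans (abs_nonneg _) (hM a ⟨le_refl a, hab.le⟩)
  have hud : Differentiable ℝ u := hu.differentiable (by norm_num)
  have hd1c : Continuous (deriv u) :=
    (((contDiff_succ_iff_deriv.mp (by exact_mod_cast hu : ContDiff ℝ (1+1) u)).2.2).differentiable
      one_ne_zero).continuous
  have huIcc : uIcc a b = Icc a b := uIcc_of_le hab.le
  set slope := (u b - u a) / (b - a) with hslope
  set w : ℝ → ℝ := fun η => (c - η) ^ (-α) with hw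
  set w' : ℝ → ℝ := fun η => α * (c - η) ^ (-α - 1) with hw'
  set e : ℝ → ℝ := fun η => u η - (u a + slope * (η - a)) with he
  set e' : ℝ → ℝ := fun η => deriv u η - slope with he'
  have hcpos : ∀ η ∈ Icc a b, 0 < c - η := fun η hη => by
    have := hη.2; linarith
  have hwd : ∀ η ∈ uIcc a b, HasDerivAt w (w' η) η := by
    intro η hη
    rw [huIcc] at hη
    have h1 : HasDerivAt (fun t : ℝ => c - t) (-1) η := by
      simpa using (hasDerivAt_id η).const_sub c
    have h2 := h1.rpow_const (p := -α) (Or.inl (hcpos η hη).ne')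
    convert h2 using 1
    simp only [hw']; ring
  have hed : ∀ η ∈ uIcc a b, HasDerivAt e (e' η) η := by
    intro η _
    have h1 : HasDerivAt (fun t : ℝ => u a + slope * (t - a)) slope η := by
      simpa using (((hasDerivAt_id η).sub_const a).const_mul slope).const_add (u a)
    exact ((hud η).hasDerivAt).sub h1
  have hwcont : ContinuousOn w (uIcc a b) := by
    intro η hη
    exact (ContinuousAt.continuousWithinAt (by
      apply ContinuousAt.rpow_const (by fun_prop)
      left; rw [huIcc] at hη; exact (hcpos η hη).ne')) 
  have hw'cont : ContinuousOn w' (uIcc a b) := by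
    intro η hη
    exact (ContinuousAt.continuousWithinAt (by
      apply ContinuousAt.mul continuousAt_const
      apply ContinuousAt.rpow_const (by fun_prop)
      left; rw [huIcc] at hη; exact (hcpos η hη).ne'))
  have he'cont : ContinuousOn e' (uIcc a b) := (hd1c.sub continuous_const).continuousOn
  have hecont : ContinuousOn e (uIcc a b) := (hud.continuous.sub (by fun_prop)).continuousOn
  have hint1 : IntervalIntegrable e' MeasureTheory.volume a b := he'cont.intervalIntegrable
  have hint2 : IntervalIntegrable w' MeasureTheory.volume a b := hw'cont.intervalIntegrable
  have hea : e a = 0 := by simp [he]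
  have heb : e b = 0 := by
    simp only [he, hslope]
    rw [div_mul_cancel₀ _ hba]; ring
  have hibp : (∫ η in a..b, w η * e' η) = w b * e b - w a * e a - ∫ η in a..b, w' η * e η :=
    integral_mul_deriv_eq_deriv_mul hwd hed hint2 hint1
  rw [hea, heb, mul_zero, mul_zero, sub_zero, zero_sub] at hibp
  have hgoal1 : (∫ η in a..b, (deriv u η - slope) * (c - η) ^ (-α)) = ∫ η in a..b, w η * e' η := by
    apply integral_congr
    intro η _
    simp [hw, he']; ring
  rw [hgoal1, hibp, abs_neg]
  -- |∫ w' e| ≤ ∫ w' * E = E * (w b - w a)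
  set E := M * (b - a) ^ 2 / 8 with hE
  have hbound : ∀ η ∈ Icc a b, |w' η * e η| ≤ w' η * E := by
    intro η hη
    rw [abs_mul]
    have hw'pos : 0 ≤ w' η := by
      apply mul_nonneg hα0.le
      exact Real.rpow_nonneg (hcpos η hη).le _
    rw [abs_of_nonneg hw'pos]
    apply mul_le_mul_of_nonneg_left _ hw'pos
    exact interp_err hu hab hM hη
  have habs : |∫ η in a..b, w' η * e η| ≤ ∫ η in a..b, w' η * E := by
    calc |∫ η in a..b, w' η * e η| ≤ ∫ η in a..b, |w' η * e η| :=
          intervalIntegral.abs_integral_le_integral_abs hab.le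
      _ ≤ ∫ η in a..b, w' η * E := by
          apply integral_mono_on hab.le _ (hint2.mul_const E)
          · intro η hη; exact hbound η hη
          · exact ((hw'cont.mul hecont).abs).intervalIntegrable
  have hftc : (∫ η in a..b, w' η) = w b - w a := integral_eq_sub_of_hasDerivAt hwd hint2
  have hmul : (∫ η in a..b, w' η * E) = (w b - w a) * E := by
    rw [intervalIntegral.integral_mul_const, hftc]
  calc |∫ η in a..b, w' η * e η| ≤ ∫ η in a..b, w' η * E := habs
    _ = (w b - w a) * E := hmul
    _ = M * (b - a) ^ 2 / 8 * ((c - b) ^ (-α) - (c - a) ^ (-α)) := by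
        simp only [hw, hE]; ring

lemma telescope_icc (h : ℕ → ℝ) (j : ℕ) :
    ∑ s ∈ Finset.Icc 1 j, (h s - h (s - 1)) = h j - h 0 := by
  induction j with
  | zero => simp
  | succ n ih => rw [Finset.sum_Icc_succ_top (by omega : 1 ≤ n + 1), ih]; simp

theorem stmt_9 (α τ : ℝ) (hα0 : 0 < α) (hα1 : α < 1) (hτ : 0 < τ)
    (j : ℕ) (u : ℝ → ℝ) (hu : ContDiff ℝ 2 u) (M₂ : ℝ)
    (hM : ∀ t ∈ Icc (0 : ℝ) (((j : ℝ) + 1) * τ), |iteratedDeriv 2 u t| ≤ M₂) :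
    |(1 / Real.Gamma (1 - α))
        * ∑ s ∈ Finset.Icc 1 j,
            ∫ η in (((s : ℝ) - 1) * τ)..((s : ℝ) * τ),
              (deriv u η - (u ((s : ℝ) * τ) - u (((s : ℝ) - 1) * τ)) / τ)
                * (((j : ℝ) + 1/2) * τ - η) ^ (-α)|
      ≤ (2 : ℝ) ^ α * M₂ / (8 * Real.Gamma (1 - α)) * τ ^ (2 - α) := by
  have hΓ : 0 < Real.Gamma (1 - α) := Real.Gamma_pos_of_pos (by linarith)
  have hjτ : (0:ℝ) ≤ ((j:ℝ) + 1) * τ := by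
    apply mul_nonneg _ hτ.le
    positivity
  have hM0 : 0 ≤ M₂ := le_trans (abs_nonneg _) (hM 0 ⟨le_refl 0, hjτ⟩)
  set c : ℝ := ((j:ℝ) + 1/2) * τ with hc
  set E : ℝ := M₂ * τ ^ 2 / 8 with hE
  set g : ℕ → ℝ := fun s => (c - (s:ℝ) * τ) ^ (-α) with hg
  have hterm : ∀ s ∈ Finset.Icc 1 j,
      |∫ η in (((s:ℝ) - 1) * τ)..((s:ℝ) * τ),
          (deriv u η - (u ((s:ℝ) * τ) - u (((s:ℝ) - 1) * τ)) / τ) * (c - η) ^ (-α)|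
        ≤ E * (g s - g (s - 1)) := by
    intro s hs
    obtain ⟨hs1, hsj⟩ := Finset.mem_Icc.mp hs
    have hs1' : (1:ℝ) ≤ (s:ℝ) := by exact_mod_cast hs1
    have hsj' : (s:ℝ) ≤ (j:ℝ) := by exact_mod_cast hsj
    have hab : ((s:ℝ) - 1) * τ < (s:ℝ) * τ := by nlinarith
    have hbc : (s:ℝ) * τ < c := by rw [hc]; nlinarith
    have hsub : Icc (((s:ℝ) - 1) * τ) ((s:ℝ) * τ) ⊆ Icc (0:ℝ) (((j:ℝ) + 1) * τ) := by
      intro t ht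
      refine ⟨le_trans (by nlinarith) ht.1, le_trans ht.2 (by nlinarith)⟩
    have hba : (s:ℝ) * τ - ((s:ℝ) - 1) * τ = τ := by ring
    have h := interval_bound hu hab hbc (fun t ht => hM t (hsub ht)) hα0
    rw [hba] at h
    have hcast : ((s - 1 : ℕ) : ℝ) = (s:ℝ) - 1 := by
      have := Nat.cast_sub hs1 (R := ℝ); simpa using this
    have hgs : g s - g (s - 1) = (c - (s:ℝ) * τ) ^ (-α) - (c - ((s:ℝ) - 1) * τ) ^ (-α) := by
      rw [hg]; simp only [hcast]
    rw [hgs, hE]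
    exact h
  have htel := telescope_icc g j
  have hsum : |∑ s ∈ Finset.Icc 1 j,
      ∫ η in (((s:ℝ) - 1) * τ)..((s:ℝ) * τ),
        (deriv u η - (u ((s:ℝ) * τ) - u (((s:ℝ) - 1) * τ)) / τ) * (c - η) ^ (-α)|
      ≤ E * (g j - g 0) := by
    calc |∑ s ∈ Finset.Icc 1 j, _| ≤ ∑ s ∈ Finset.Icc 1 j,
          |∫ η in (((s:ℝ) - 1) * τ)..((s:ℝ) * τ),
            (deriv u η - (u ((s:ℝ) * τ) - u (((s:ℝ) - 1) * τ)) / τ) * (c - η) ^ (-α)| :=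
        Finset.abs_sum_le_sum_abs _ _
      _ ≤ ∑ s ∈ Finset.Icc 1 j, E * (g s - g (s - 1)) := Finset.sum_le_sum hterm
      _ = E * (g j - g 0) := by rw [← Finset.mul_sum, htel]
  have hg0 : 0 ≤ g 0 := by
    apply Real.rpow_nonneg
    rw [hc]; push_cast; nlinarith
  have hgj : g j = (τ / 2) ^ (-α) := by
    rw [hg]
    congr 1
    rw [hc]; ring
  have hτ2 : (τ / 2 : ℝ) ^ (-α) = 2 ^ α / τ ^ α := by
    rw [Real.div_rpow hτ.le (by norm_num), Real.rpow_neg hτ.le, Real.rpow_neg (by norm_num)]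
    field_simp
  have hfin : E * (g j - g 0) ≤ E * (2 ^ α / τ ^ α) := by
    apply mul_le_mul_of_nonneg_left _ (by rw [hE]; positivity)
    rw [hgj, hτ2]; linarith
  have hτα : (0:ℝ) < τ ^ α := Real.rpow_pos_of_pos hτ α
  rw [abs_mul, abs_of_pos (by positivity : (0:ℝ) < 1 / Real.Gamma (1 - α))]
  have h2 : τ ^ (2 - α) = τ ^ (2:ℕ) / τ ^ α := by
    rw [show (2 - α : ℝ) = (2:ℝ) - α from rfl, Real.rpow_sub hτ]
    norm_num [Real.rpow_two]
  calc 1 / Real.Gamma (1 - α) * |∑ s ∈ Finset.Icc 1 j, _|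
      ≤ 1 / Real.Gamma (1 - α) * (E * (2 ^ α / τ ^ α)) := by
        apply mul_le_mul_of_nonneg_left (le_trans hsum hfin) (by positivity)
    _ = (2:ℝ) ^ α * M₂ / (8 * Real.Gamma (1 - α)) * τ ^ (2 - α) := by
        rw [h2, hE]
        field_simp
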